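/- The sequences p and q partition the positive integers: every positive integer N appears exactly once among the values of p and q; that is, every N ≥ 1 is equal to p(k) for some k ≥ 1 or to q(k) for some k ≥ 1, no positive integer is both a value of p and a value of q, and both p and q take each of their values exactly once (they are injective). -/
import Mathlib


/-- Wythoff sequences: `p 1 = 1`, `q n = p n + n` for `n ≥ 1`, and `p (n+1)` is the
smallest positive integer not contained in `U_n = {p 1, …, p n, q 1, …, q n}`. -/

theorem stmt_2 (p q : ℕ → ℕ)
    (hp1 : p 1 = 1)
    (hq : ∀ n, 1 ≤ n → q n = p n + n)
    (hmin : ∀ n, 1 ≤ n →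
      IsLeast {m : ℕ | 0 < m ∧ ∀ i, 1 ≤ i → i ≤ n → m ≠ p i ∧ m ≠ q i} (p (n + 1))) :
    (∀ N : ℕ, 1 ≤ N → (∃ k, 1 ≤ k ∧ p k = N) ∨ (∃ k, 1 ≤ k ∧ q k = N)) ∧
    (∀ k j, 1 ≤ k → 1 ≤ j → p k ≠ q j) ∧
    (∀ k j, 1 ≤ k → 1 ≤ j → p k = p j → k = j) ∧
    (∀ k j, 1 ≤ k → 1 ≤ j → q k = q j → k = j) := by
  have hpmem : ∀ n, 1 ≤ n →
      (0 < p (n+1) ∧ ∀ i, 1 ≤ i → i ≤ n → p (n+1) ≠ p i ∧ p (n+1) ≠ q i) :=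
    fun n hn => (hmin n hn).1
  -- p is strictly increasing step-wise
  have hstep : ∀ n, 1 ≤ n → p n < p (n + 1) := by
    intro n hn
    rcases Nat.lt_or_ge n 2 with h | h
    · have hn1 : n = 1 := by omega
      subst hn1
      have h2 := ((hpmem 1 le_rfl).2 1 le_rfl le_rfl).1
      have hpos := (hpmem 1 le_rfl).1
      omega
    · obtain ⟨m, rfl⟩ : ∃ m, n = m + 1 := ⟨n - 1, by omega⟩
      have hm : 1 ≤ m := by omega
      have hmem2 := hpmem (m + 1) (by omega)
      have hle := (hmin m hm).2
        ⟨hmem2.1, fun i hi him => hmem2.2 i hi (by omega)⟩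
      have hne := (hmem2.2 (m + 1) (by omega) le_rfl).1
      omega
  have hmono : ∀ k j, 1 ≤ k → k < j → p k < p j := by
    intro k j hk hkj
    induction j with
    | zero => omega
    | succ n ih =>
      rcases Nat.lt_or_ge k n with h | h
      · exact (ih h).trans (hstep n (by omega))
      · have : k = n := by omega
        subst this; exact hstep k hk
  have hge : ∀ k, 1 ≤ k → k ≤ p k := by
    intro k hk
    induction k with
    | zero => omega
    | succ n ih =>
      rcases Nat.lt_or_ge 1 (n + 1) with h | h
      · have := hmono n (n + 1) (by omega) (by omega)
        have := ih (by omega)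
        omega
      · have : n = 0 := by omega
        subst this; simpa using hp1.ge
  refine ⟨?_, ?_, ?_, ?_⟩
  · -- completeness
    intro N hN
    by_contra hcon
    push_neg at hcon
    obtain ⟨hnp, hnq⟩ := hcon
    have hlt : N < p (N + 1) := lt_of_le_of_lt (hge N hN) (hstep N hN)
    have hle := (hmin N hN).2 ⟨hN, fun i hi hiN =>
      ⟨fun h => hnp i hi h.symm, fun h => hnq i hi h.symm⟩⟩
    omega
  · -- p k ≠ q j
    intro k j hk hj
    rcases le_or_gt k j with h | h
    · have h1 : p k ≤ p j := by
        rcases Nat.eq_or_lt_of_le h with rfl | h'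
        · exact le_rfl
        · exact (hmono k j hk h').le
      have := hq j hj
      omega
    · obtain ⟨m, rfl⟩ : ∃ m, k = m + 1 := ⟨k - 1, by omega⟩
      exact ((hpmem m (by omega)).2 j hj (by omega)).2
  · -- p injective
    intro k j hk hj hpe
    by_contra hne
    rcases Nat.lt_or_ge k j with h | h
    · exact absurd hpe (hmono k j hk h).ne
    · exact absurd hpe.symm (hmono j k hj (by omega)).ne
  · -- q injective
    intro k j hk hj hqe
    rw [hq k hk, hq j hj] at hqe
    by_contra hne
    rcases Nat.lt_or_ge k j with h | h
    · have := hmono k j hk h; omega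
    · have := hmono j k hj (by omega); omega
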